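/- T∅_L is model complete: if M and N are models of T∅_L and h : M → N is an L-embedding, then h is an elementary embedding. -/

import Mathlib

open FirstOrder FirstOrder.Language

universe u v w

/-- A flat formula in the variables `V`: either `R(z̄)` (`pos = true`), `¬ R(z̄)`
(`pos = false`), or `f(z̄) = z'`.  Constant symbols are `0`-ary function symbols. -/
inductive FlatFormula (L : FirstOrder.Language.{v, w}) (V : Type u) where
  | rel {n : ℕ} (R : L.Relations n) (z : Fin n → V) (pos : Bool) : FlatFormula L V
  | func {n : ℕ} (f : L.Functions n) (z : Fin n → V) (z' : V) : FlatFormula L V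

/-- Realization of a flat formula in an `L`-structure `M` under an assignment `v : V → M`. -/
def FlatFormula.Realize {L : FirstOrder.Language.{v, w}} {V : Type u} {M : Type*}
    [L.Structure M] (v : V → M) : FlatFormula L V → Prop
  | .rel R z pos => (Structure.RelMap R (fun i => v (z i)) ↔ pos = true)
  | .func f z z' => Structure.funMap f (fun i => v (z i)) = v z'

/-- A flat diagram (a set of flat formulas) is consistent if no relation instance occurs both
positively and negatively, and each function symbol is assigned at most one value on each
tuple of variables. -/
def FlatConsistent {L : FirstOrder.Language.{v, w}} {V : Type u}
    (Δ : Set (FlatFormula L V)) : Prop :=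
  (∀ {n : ℕ} (R : L.Relations n) (z : Fin n → V),
      ¬ (FlatFormula.rel R z true ∈ Δ ∧ FlatFormula.rel R z false ∈ Δ)) ∧
  (∀ {n : ℕ} (f : L.Functions n) (z : Fin n → V) (z₁ z₂ : V),
      FlatFormula.func f z z₁ ∈ Δ → FlatFormula.func f z z₂ ∈ Δ → z₁ = z₂)

/-- A flat formula mentions a variable on the right of `α ⊕ β` (i.e. among the `ȳ`)
in its argument tuple. -/
def FlatFormula.MentionsRight {L : FirstOrder.Language.{v, w}} {α β : Type u} :
    FlatFormula L (α ⊕ β) → Prop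
  | .rel _ z _ => ∃ i, (z i).isRight
  | .func _ z _ => ∃ i, (z i).isRight

/-- An extension diagram in `(x̄, ȳ)` (with `x̄` indexed by `Fin m` and `ȳ` by `Fin n`):
a finite consistent flat diagram each of whose formulas mentions a variable among the `ȳ`. -/
def IsExtensionDiagram {L : FirstOrder.Language.{v, w}} {m n : ℕ}
    (Δ : Set (FlatFormula L (Fin m ⊕ Fin n))) : Prop :=
  Δ.Finite ∧ FlatConsistent Δ ∧ ∀ φ ∈ Δ, φ.MentionsRight

/-- `M ⊨ φ_Δ(ā, b̄)`: all formulas of `Δ` hold under the assignment `Sum.elim a b`, and the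
combined tuple `ā b̄` is non-redundant (its entries are pairwise distinct). -/
def RealizesExtDiagram {L : FirstOrder.Language.{v, w}} {m n : ℕ} {M : Type*} [L.Structure M]
    (Δ : Set (FlatFormula L (Fin m ⊕ Fin n))) (a : Fin m → M) (b : Fin n → M) : Prop :=
  (∀ φ ∈ Δ, FlatFormula.Realize (Sum.elim a b) φ) ∧ Function.Injective (Sum.elim a b)

/-- `M` is a model of `T^∅_L`: `M` satisfies the sentence
`ψ_Δ = ∀ x̄ (δ(x̄) → ∃ ȳ φ_Δ(x̄, ȳ))` for every extension diagram `Δ`. -/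
def ModelsTEmpty (L : FirstOrder.Language.{v, w}) (M : Type*) [L.Structure M] : Prop :=
  ∀ (m n : ℕ) (Δ : Set (FlatFormula L (Fin m ⊕ Fin n))), IsExtensionDiagram Δ →
    ∀ a : Fin m → M, Function.Injective a → ∃ b : Fin n → M, RealizesExtDiagram Δ a b

/-- An `L`-structure `A` is existentially closed if every existential quantifier-free
statement with parameters in `A` which holds in some extension of `A` already holds in `A`. -/
def IsExistentiallyClosed (L : FirstOrder.Language.{v, w}) (A : Type u) [L.Structure A] :
    Prop :=
  ∀ (B : Type (max u v w)) [L.Structure B] (g : A ↪[L] B)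
    (m n : ℕ) (φ : L.Formula (Fin m ⊕ Fin n)), φ.IsQF →
      ∀ a : Fin m → A,
        (∃ b : Fin n → B, φ.Realize (Sum.elim (fun i => g (a i)) b)) →
        ∃ b : Fin n → A, φ.Realize (Sum.elim a b)

/-- A bundled `L`-structure (used to quantify existentially over `L`-structures). -/
structure BStructure (L : FirstOrder.Language.{v, w}) : Type (max (u + 1) v w) where
  carrier : Type u
  [struc : L.Structure carrier]

attribute [instance] BStructure.struc

instance {L : FirstOrder.Language.{v, w}} : CoeSort (BStructure.{u} L) (Type u) :=
  ⟨BStructure.carrier⟩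

/-- All variables occurring in a flat formula lie in the set `S`. -/
def FlatFormula.VarsIn {L : FirstOrder.Language.{v, w}} {V : Type u} (S : Set V) :
    FlatFormula L V → Prop
  | .rel _ z _ => ∀ i, z i ∈ S
  | .func _ z z' => (∀ i, z i ∈ S) ∧ z' ∈ S

/-- `Δ` is a complete consistent flat diagram in the variables `S`. -/
def FlatCompleteOn {L : FirstOrder.Language.{v, w}} {V : Type u} (S : Set V)
    (Δ : Set (FlatFormula L V)) : Prop :=
  FlatConsistent Δ ∧ (∀ φ ∈ Δ, FlatFormula.VarsIn S φ) ∧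
  (∀ {n : ℕ} (R : L.Relations n) (z : Fin n → V), (∀ i, z i ∈ S) →
      (FlatFormula.rel R z true ∈ Δ ∨ FlatFormula.rel R z false ∈ Δ)) ∧
  (∀ {n : ℕ} (f : L.Functions n) (z : Fin n → V), (∀ i, z i ∈ S) →
      ∃ z' ∈ S, FlatFormula.func f z z' ∈ Δ)

namespace TEmptyMC

open FirstOrder FirstOrder.Language Set

variable {L : FirstOrder.Language.{v, w}}

/-- Terms over the function-symbol set `F`, of depth at most `s`. -/
def TermsB (F : Set (Σ n, L.Functions n)) (ι : Type u) : ℕ → Set (L.Term ι)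
  | 0 => Set.range Term.var
  | s + 1 => TermsB F ι s ∪
      {t | ∃ (n : ℕ) (f : L.Functions n) (ts : Fin n → L.Term ι),
        (⟨n, f⟩ : Σ n, L.Functions n) ∈ F ∧ (∀ i, ts i ∈ TermsB F ι s) ∧ t = Term.func f ts}

variable {F : Set (Σ n, L.Functions n)} {ι : Type u}

lemma termsB_succ_supset {s : ℕ} : TermsB F ι s ⊆ TermsB F ι (s + 1) :=
  Set.subset_union_left

lemma termsB_mono {s s' : ℕ} (h : s ≤ s') : TermsB F ι s ⊆ TermsB F ι s' := by
  induction h with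
  | refl => exact subset_rfl
  | step _ ih => exact ih.trans termsB_succ_supset

lemma var_mem_termsB {s : ℕ} (i : ι) : Term.var i ∈ TermsB F ι s :=
  termsB_mono (Nat.zero_le s) ⟨i, rfl⟩

lemma func_mem_termsB {s : ℕ} {n : ℕ} {f : L.Functions n}
    (hf : (⟨n, f⟩ : Σ n, L.Functions n) ∈ F) {ts : Fin n → L.Term ι}
    (hts : ∀ i, ts i ∈ TermsB F ι s) : Term.func f ts ∈ TermsB F ι (s + 1) :=
  Or.inr ⟨n, f, ts, hf, hts, rfl⟩

lemma termsB_finite (hF : F.Finite) [Finite ι] : ∀ s, (TermsB F ι s).Finite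
  | 0 => Set.finite_range _
  | (s + 1) => by
      have IH := termsB_finite hF s
      have hbig : (⋃ p ∈ F, (fun ts : Fin p.1 → L.Term ι => Term.func p.2 ts) ''
          (Set.univ.pi fun _ : Fin p.1 => TermsB F ι s)).Finite :=
        Set.Finite.biUnion hF (fun p _ =>
          Set.Finite.image _ (Set.Finite.pi (fun _ : Fin p.1 => IH)))
      refine Set.Finite.subset (IH.union hbig) ?_
      rintro t (ht | ⟨n, f, ts, hf, hts, rfl⟩)
      · exact Or.inl ht
      · exact Or.inr (Set.mem_biUnion hf ⟨ts, fun i _ => hts i, rfl⟩)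

/-- Depth of a term. -/
def tdepth : L.Term ι → ℕ
  | .var _ => 0
  | .func _ ts => (Finset.univ.sup fun i => tdepth (ts i)) + 1

/-- Function symbols of a term. -/
def tsyms : L.Term ι → Set (Σ n, L.Functions n)
  | .var _ => ∅
  | .func f ts => insert ⟨_, f⟩ (⋃ i, tsyms (ts i))

lemma tsyms_finite : ∀ t : L.Term ι, (tsyms t).Finite
  | .var _ => by simp [tsyms]
  | .func _ ts => by
      rw [tsyms]
      exact Set.Finite.insert _ (Set.finite_iUnion fun i => tsyms_finite (ts i))

lemma mem_termsB_of : ∀ (t : L.Term ι), tsyms t ⊆ F → ∀ {s : ℕ}, tdepth t ≤ s →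
    t ∈ TermsB F ι s
  | .var i, _, s, _ => var_mem_termsB i
  | .func f ts, hsub, s, hd => by
      rw [tdepth] at hd
      obtain ⟨s', rfl⟩ : ∃ s', s = s' + 1 := ⟨s - 1, by omega⟩
      refine func_mem_termsB (hsub (by rw [tsyms]; exact Set.mem_insert _ _)) fun i => ?_
      refine mem_termsB_of (ts i) (fun x hx => hsub ?_) ?_
      · rw [tsyms]; exact Set.mem_insert_of_mem _ (Set.mem_iUnion.2 ⟨i, hx⟩)
      · exact le_trans (Finset.le_sup (f := fun i => tdepth (ts i)) (Finset.mem_univ i)) (by omega)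

lemma relabel_mem_termsB {ι' : Type u'} (j : ι' → ι) :
    ∀ {s : ℕ} (t : L.Term ι'), t ∈ TermsB F ι' s → t.relabel j ∈ TermsB F ι s := by
  intro s
  induction s with
  | zero => rintro t ⟨i, rfl⟩; exact var_mem_termsB (j i)
  | succ s ih =>
      rintro t (ht | ⟨n, f, ts, hf, hts, rfl⟩)
      · exact termsB_succ_supset (ih t ht)
      · exact func_mem_termsB hf fun i => ih _ (hts i)

section Hull

variable {M : Type*} [L.Structure M]

/-- The set of values of terms of depth at most `s` over the tuple `v`. -/
def Hull (F : Set (Σ n, L.Functions n)) (v : ι → M) (s : ℕ) : Set M :=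
  (fun t : L.Term ι => t.realize v) '' TermsB F ι s

lemma hull_mono {v : ι → M} {s s' : ℕ} (h : s ≤ s') : Hull F v s ⊆ Hull F v s' :=
  Set.image_mono (termsB_mono h)

lemma mem_hull_of_range {v : ι → M} {s : ℕ} (i : ι) : v i ∈ Hull F v s :=
  ⟨Term.var i, var_mem_termsB i, rfl⟩

lemma funMap_mem_hull {v : ι → M} {s : ℕ} {n : ℕ} {f : L.Functions n}
    (hf : (⟨n, f⟩ : Σ n, L.Functions n) ∈ F) {w : Fin n → M}
    (hw : ∀ i, w i ∈ Hull F v s) : Structure.funMap f w ∈ Hull F v (s + 1) := by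
  choose ts hts hval using hw
  exact ⟨Term.func f ts, func_mem_termsB hf hts, by simp [Term.realize, hval]⟩

lemma mem_hull_succ {v : ι → M} {s : ℕ} {x : M} (hx : x ∈ Hull F v (s + 1)) :
    x ∈ Hull F v s ∨ ∃ (n : ℕ) (f : L.Functions n) (w : Fin n → M),
      (⟨n, f⟩ : Σ n, L.Functions n) ∈ F ∧ (∀ i, w i ∈ Hull F v s) ∧
        x = Structure.funMap f w := by
  obtain ⟨t, (ht | ⟨n, f, ts, hf, hts, rfl⟩), rfl⟩ := hx
  · exact Or.inl ⟨t, ht, rfl⟩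
  · exact Or.inr ⟨n, f, fun i => (ts i).realize v, hf, fun i => ⟨ts i, hts i, rfl⟩,
      by simp [Term.realize]⟩

lemma hull_finite (hF : F.Finite) [Finite ι] {v : ι → M} (s : ℕ) : (Hull F v s).Finite :=
  (termsB_finite hF s).image _

lemma hull_comp_subset {ι' : Type u'} (j : ι' → ι) {v : ι → M} {s : ℕ} :
    Hull F (v ∘ j) s ⊆ Hull F v s := by
  rintro x ⟨t, ht, rfl⟩
  exact ⟨t.relabel j, relabel_mem_termsB j t ht, by simp [Term.realize_relabel]⟩

end Hull

end TEmptyMC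

namespace TEmptyMC

open FirstOrder FirstOrder.Language Set

variable {L : FirstOrder.Language.{v, w}} {F : Set (Σ n, L.Functions n)}
  {G : Set (Σ n, L.Relations n)} {ι : Type u}
  {M : Type u₁} {N : Type u₂} [L.Structure M] [L.Structure N]

/-- Witness for the back-and-forth invariant: `Θ` maps the depth-`ρ` hull of `d` in `N`
isomorphically (as far as `F`-functions and `G`-relations go) onto the hull of `c` in `M`. -/
structure InvWit (F : Set (Σ n, L.Functions n)) (G : Set (Σ n, L.Relations n)) (ρ : ℕ)
    (c : ι → M) (d : ι → N) (Θ : N → M) : Prop where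
  map_base : ∀ i, Θ (d i) = c i
  injOn : Set.InjOn Θ (Hull F d ρ)
  map_fun : ∀ s, s < ρ → ∀ (n : ℕ) (f : L.Functions n),
      (⟨n, f⟩ : Σ n, L.Functions n) ∈ F →
      ∀ w : Fin n → N, (∀ i, w i ∈ Hull F d s) →
        Θ (Structure.funMap f w) = Structure.funMap f (Θ ∘ w)
  map_rel : ∀ (n : ℕ) (R : L.Relations n), (⟨n, R⟩ : Σ n, L.Relations n) ∈ G →
      ∀ w : Fin n → N, (∀ i, w i ∈ Hull F d ρ) →
        (Structure.RelMap R w ↔ Structure.RelMap R (Θ ∘ w))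

/-- The back-and-forth invariant. -/
def Inv (F : Set (Σ n, L.Functions n)) (G : Set (Σ n, L.Relations n)) (ρ : ℕ)
    (c : ι → M) (d : ι → N) : Prop :=
  ∃ Θ : N → M, InvWit F G ρ c d Θ

lemma InvWit.realize_term {ρ : ℕ} {c : ι → M} {d : ι → N} {Θ : N → M}
    (h : InvWit F G ρ c d Θ) :
    ∀ s, s ≤ ρ → ∀ t ∈ TermsB F ι s, Θ (t.realize d) = t.realize c := by
  intro s
  induction s with
  | zero =>
      rintro _ t ⟨i, rfl⟩
      simpa [Term.realize] using h.map_base i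
  | succ s ih =>
      rintro hs t (ht | ⟨n, f, ts, hf, hts, rfl⟩)
      · exact ih (by omega) t ht
      · have h1 : Θ (Structure.funMap f fun i => (ts i).realize d)
            = Structure.funMap f (Θ ∘ fun i => (ts i).realize d) :=
          h.map_fun s (by omega) n f hf _ (fun i => ⟨ts i, hts i, rfl⟩)
        simp only [Term.realize]
        rw [h1]
        congr 1
        funext i
        exact ih (by omega) (ts i) (hts i)

lemma InvWit.mem_hull {ρ : ℕ} {c : ι → M} {d : ι → N} {Θ : N → M}
    (h : InvWit F G ρ c d Θ) {s : ℕ} (hs : s ≤ ρ) {x : N} (hx : x ∈ Hull F d s) :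
    Θ x ∈ Hull F c s := by
  obtain ⟨t, ht, rfl⟩ := hx
  exact ⟨t, ht, (h.realize_term s hs t ht).symm⟩

lemma InvWit.image_hull {ρ : ℕ} {c : ι → M} {d : ι → N} {Θ : N → M}
    (h : InvWit F G ρ c d Θ) {s : ℕ} (hs : s ≤ ρ) : Θ '' Hull F d s = Hull F c s := by
  ext x
  constructor
  · rintro ⟨y, hy, rfl⟩; exact h.mem_hull hs hy
  · rintro ⟨t, ht, rfl⟩
    exact ⟨t.realize d, ⟨t, ht, rfl⟩, h.realize_term s hs t ht⟩

lemma Inv.mono_depth {ρ ρ' : ℕ} {c : ι → M} {d : ι → N} (h : Inv F G ρ c d)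
    (hle : ρ' ≤ ρ) : Inv F G ρ' c d := by
  obtain ⟨Θ, hΘ⟩ := h
  exact ⟨Θ, hΘ.map_base, hΘ.injOn.mono (hull_mono hle),
    fun s hs => hΘ.map_fun s (by omega),
    fun n R hR w hw => hΘ.map_rel n R hR w (fun i => hull_mono hle (hw i))⟩

lemma Inv.reindex {ρ : ℕ} {c : ι → M} {d : ι → N} (h : Inv F G ρ c d)
    {ι' : Type u'} (j : ι' → ι) : Inv F G ρ (c ∘ j) (d ∘ j) := by
  obtain ⟨Θ, hΘ⟩ := h
  exact ⟨Θ, fun i => hΘ.map_base (j i), hΘ.injOn.mono (hull_comp_subset j),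
    fun s hs n f hf w hw => hΘ.map_fun s hs n f hf w
      (fun i => hull_comp_subset j (hw i)),
    fun n R hR w hw => hΘ.map_rel n R hR w (fun i => hull_comp_subset j (hw i))⟩

lemma Inv.symm [Nonempty N] {ρ : ℕ} {c : ι → M} {d : ι → N} (h : Inv F G ρ c d) :
    Inv F G ρ d c := by
  obtain ⟨Θ, hΘ⟩ := h
  set Θ' : M → N := Function.invFunOn Θ (Hull F d ρ) with hΘ'def
  have hleft : ∀ x ∈ Hull F d ρ, Θ' (Θ x) = x := by
    intro x hx
    have h1 : Θ (Θ' (Θ x)) = Θ x := Function.invFunOn_eq ⟨x, hx, rfl⟩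
    have h2 : Θ' (Θ x) ∈ Hull F d ρ := Function.invFunOn_mem ⟨x, hx, rfl⟩
    exact hΘ.injOn h2 hx h1
  -- for `x ∈ Hull F c s`, `Θ' x` is the unique preimage, and it is in `Hull F d s`
  have hback : ∀ s, s ≤ ρ → ∀ x ∈ Hull F c s, Θ' x ∈ Hull F d s ∧ Θ (Θ' x) = x := by
    intro s hs x hx
    rw [← hΘ.image_hull hs] at hx
    obtain ⟨y, hy, rfl⟩ := hx
    rw [hleft y (hull_mono hs hy)]
    exact ⟨hy, rfl⟩
  refine ⟨Θ', ?_, ?_, ?_, ?_⟩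
  · intro i
    have := hΘ.map_base i
    rw [← this]
    exact hleft (d i) (mem_hull_of_range i)
  · intro x hx y hy hxy
    have h1 := hback ρ le_rfl x hx
    have h2 := hback ρ le_rfl y hy
    rw [← h1.2, ← h2.2, hxy]
  · intro s hs n f hf w hw
    have h1 : ∀ i, Θ' (w i) ∈ Hull F d s ∧ Θ (Θ' (w i)) = w i :=
      fun i => hback s (by omega) (w i) (hw i)
    have h2 : Structure.funMap f w = Θ (Structure.funMap f (Θ' ∘ w)) := by
      rw [hΘ.map_fun s hs n f hf (Θ' ∘ w) (fun i => (h1 i).1)]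
      congr 1
      funext i
      exact ((h1 i).2).symm
    rw [h2]
    exact hleft _ (hull_mono (by omega) (funMap_mem_hull hf (fun i => (h1 i).1)))
  · intro n R hR w hw
    have h1 : ∀ i, Θ' (w i) ∈ Hull F d ρ ∧ Θ (Θ' (w i)) = w i :=
      fun i => hback ρ le_rfl (w i) (hw i)
    have := hΘ.map_rel n R hR (Θ' ∘ w) (fun i => (h1 i).1)
    have heq : (Θ ∘ Θ' ∘ w) = w := by funext i; exact (h1 i).2
    rw [heq] at this
    exact this.symm

end TEmptyMC

namespace TEmptyMC

open FirstOrder FirstOrder.Language Set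

variable {L : FirstOrder.Language.{v, w}} {F : Set (Σ n, L.Functions n)}
  {G : Set (Σ n, L.Relations n)} {ι : Type u}
  {M : Type u₁} {N : Type u₂} [L.Structure M] [L.Structure N]

lemma hull_option_subset {d : ι → N} {e : N} {σ : ℕ} (he : e ∈ Hull F d σ) :
    ∀ s, Hull F (fun o : Option ι => o.elim e d) s ⊆ Hull F d (s + σ) := by
  intro s
  induction s with
  | zero =>
      rintro x ⟨t, ⟨i, rfl⟩, rfl⟩
      cases i with
      | none => simpa [Term.realize] using hull_mono (by omega) he
      | some i =>
          simpa [Term.realize] using mem_hull_of_range (F := F) (s := 0 + σ) i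
  | succ s ih =>
      intro x hx
      rcases mem_hull_succ hx with hx' | ⟨n, f, w, hf, hw, rfl⟩
      · exact hull_mono (by omega) (ih hx')
      · exact hull_mono (by omega) (funMap_mem_hull hf (fun i => ih (hw i)))

/-- The extension diagram of the finite configuration described by `val`. -/
def diagOf (F : Set (Σ n, L.Functions n)) (G : Set (Σ n, L.Relations n)) {m n : ℕ}
    (val : Fin m ⊕ Fin n → N) : Set (FlatFormula L (Fin m ⊕ Fin n)) :=
  fun ψ => match ψ with
  | FlatFormula.rel R z pos => (⟨_, R⟩ : Σ k, L.Relations k) ∈ G ∧ (∃ i, (z i).isRight) ∧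
      (Structure.RelMap R (fun i => val (z i)) ↔ pos = true)
  | FlatFormula.func f z z' => (⟨_, f⟩ : Σ k, L.Functions k) ∈ F ∧ (∃ i, (z i).isRight) ∧
      Structure.funMap f (fun i => val (z i)) = val z'

lemma diagOf_isExtensionDiagram (hF : F.Finite) (hG : G.Finite) {m n : ℕ}
    {val : Fin m ⊕ Fin n → N} (hval : Function.Injective val) :
    IsExtensionDiagram (diagOf F G val) := by
  refine ⟨?_, ⟨?_, ?_⟩, ?_⟩
  · have hRel : (⋃ p ∈ G, Set.range (fun q : (Fin p.1 → Fin m ⊕ Fin n) × Bool =>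
        (FlatFormula.rel p.2 q.1 q.2 : FlatFormula L (Fin m ⊕ Fin n)))).Finite :=
      hG.biUnion (fun p _ => Set.finite_range _)
    have hFun : (⋃ p ∈ F, Set.range (fun q : (Fin p.1 → Fin m ⊕ Fin n) × (Fin m ⊕ Fin n) =>
        (FlatFormula.func p.2 q.1 q.2 : FlatFormula L (Fin m ⊕ Fin n)))).Finite :=
      hF.biUnion (fun p _ => Set.finite_range _)
    refine Set.Finite.subset (hRel.union hFun) ?_
    rintro (⟨R, z, pos⟩ | ⟨f, z, z'⟩) hψ
    · exact Or.inl (Set.mem_biUnion hψ.1 ⟨(z, pos), rfl⟩)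
    · exact Or.inr (Set.mem_biUnion hψ.1 ⟨(z, z'), rfl⟩)
  · rintro nR R z ⟨⟨_, _, h1⟩, ⟨_, _, h2⟩⟩
    simp only [iff_true] at h1
    simp only [Bool.false_eq_true, iff_false] at h2
    exact h2 h1
  · rintro nf f z z₁ z₂ ⟨_, _, h1⟩ ⟨_, _, h2⟩
    exact hval (h1 ▸ h2)
  · rintro (⟨R, z, pos⟩ | ⟨f, z, z'⟩) hψ
    · exact hψ.2.1
    · exact hψ.2.1

lemma extend_lemma (hM : ModelsTEmpty L M) (hF : F.Finite) (hG : G.Finite)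
    [Fintype ι] (ρ : ℕ) (c : ι → M) (d : ι → N) (e : N)
    (h : Inv F G (ρ + (TermsB F (Option ι) ρ).ncard + 1) c d) :
    ∃ e' : M, Inv F G ρ (fun o : Option ι => o.elim e' c) (fun o : Option ι => o.elim e d) := by
  classical
  obtain ⟨Θ, hΘ⟩ := h
  set Tc := (TermsB F (Option ι) ρ).ncard with hTcdef
  set B := ρ + Tc + 1 with hBdef
  set σ := Tc + 1 with hσdef
  set extd : Option ι → N := fun o => o.elim e d with hextddef
  by_cases hA : e ∈ Hull F d σ
  · -- Case A : `e` is already in the hull of `d`; use `Θ e`.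
    have hsub : ∀ s, Hull F extd s ⊆ Hull F d (s + σ) := hull_option_subset hA
    refine ⟨Θ e, Θ, ?_, ?_, ?_, ?_⟩
    · rintro (_ | i)
      · rfl
      · exact hΘ.map_base i
    · refine hΘ.injOn.mono ?_
      have h1 := hsub ρ
      have h2 : ρ + σ = B := by omega
      rwa [h2] at h1
    · intro s hs n f hf w hw
      exact hΘ.map_fun (s + σ) (by omega) n f hf w (fun i => hsub s (hw i))
    · intro n R hR w hw
      exact hΘ.map_rel n R hR w (fun i => hull_mono (by omega) (hsub ρ (hw i)))
  · -- Case B : `e` is genuinely new.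
    set W : Set N := Hull F extd ρ with hWdef
    have hWfin : W.Finite := hull_finite hF ρ
    haveI : Finite W := hWfin.to_subtype
    -- find a gap threshold τ
    obtain ⟨τ, hτ, hgap⟩ : ∃ τ, τ ≤ Tc ∧ ∀ x ∈ W, x ∈ Hull F d (τ + 1) → x ∈ Hull F d τ := by
      by_contra hcon
      push_neg at hcon
      choose g hg1 hg2 hg3 using fun (τ : Fin (Tc + 1)) => hcon τ (by omega)
      have hlt : ∀ i j : Fin (Tc + 1), (i : ℕ) < (j : ℕ) → g i ≠ g j := by
        intro i j hij heq
        exact hg3 j (heq ▸ hull_mono (by omega) (hg2 i))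
      have hinj : Function.Injective (fun τ : Fin (Tc + 1) => (⟨g τ, hg1 τ⟩ : W)) := by
        intro i j hij
        simp only [Subtype.mk.injEq] at hij
        rcases lt_trichotomy (i : ℕ) (j : ℕ) with hc | hc | hc
        · exact absurd hij (hlt i j hc)
        · exact Fin.ext hc
        · exact absurd hij.symm (hlt j i hc)
      have h1 := Nat.card_le_card_of_injective _ hinj
      have h2 : W.ncard ≤ Tc := Set.ncard_image_le (termsB_finite hF ρ)
      simp only [Nat.card_eq_fintype_card, Fintype.card_fin, Nat.card_coe_set_eq] at h1
      omega
    have heW : e ∈ W := mem_hull_of_range (F := F) (v := extd) none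
    have heτ : e ∉ Hull F d τ := fun hc => hA (hull_mono (by omega) hc)
    set Old : Set N := W ∩ Hull F d τ with hOlddef
    set New : Set N := W \ Hull F d τ with hNewdef
    have hOldfin : Old.Finite := hWfin.inter_of_left _
    have hNewfin : New.Finite := hWfin.diff
    haveI := hOldfin.fintype
    haveI := hNewfin.fintype
    set m := Fintype.card Old with hmdef
    set n0 := Fintype.card New with hn0def
    set eo : Fin m ≃ Old := (Fintype.equivFin Old).symm with heodef
    set en : Fin n0 ≃ New := (Fintype.equivFin New).symm with hendef
    set val : Fin m ⊕ Fin n0 → N :=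
      Sum.elim (fun j => ((eo j : Old) : N)) (fun j => ((en j : New) : N)) with hvaldef
    have val_memW : ∀ p, val p ∈ W := by
      rintro (j | j)
      · exact (eo j).2.1
      · exact (en j).2.1
    have val_old : ∀ j, val (Sum.inl j) ∈ Hull F d τ := fun j => (eo j).2.2
    have val_new : ∀ j, val (Sum.inr j) ∉ Hull F d τ := fun j => (en j).2.2
    have val_inj : Function.Injective val := by
      rintro (j | j) (j' | j') hjj
      · exact congrArg Sum.inl (eo.injective (Subtype.coe_injective hjj))
      · exact absurd (hjj ▸ val_old j) (val_new j')
      · exact absurd (hjj ▸ val_new j) (fun hc => hc (val_old j'))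
      · exact congrArg Sum.inr (en.injective (Subtype.coe_injective hjj))
    set vo : W → Fin m ⊕ Fin n0 := fun x =>
      if hx : (x : N) ∈ Hull F d τ then Sum.inl (eo.symm ⟨x, x.2, hx⟩)
      else Sum.inr (en.symm ⟨x, x.2, hx⟩) with hvodef
    have val_vo : ∀ x : W, val (vo x) = x := by
      intro x
      by_cases hx : (x : N) ∈ Hull F d τ
      · simp only [hvodef, dif_pos hx, hvaldef, Sum.elim_inl, Equiv.apply_symm_apply]
      · simp only [hvodef, dif_neg hx, hvaldef, Sum.elim_inr, Equiv.apply_symm_apply]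
    have vo_isRight : ∀ x : W, (x : N) ∉ Hull F d τ → (vo x).isRight := by
      intro x hx
      simp only [hvodef, dif_neg hx, Sum.isRight_inr]
    set a : Fin m → M := fun j => Θ ((eo j : Old) : N) with hadef
    have haInj : Function.Injective a := by
      intro j j' hjj
      have h1 := hΘ.injOn (hull_mono (by omega) (eo j).2.2)
        (hull_mono (by omega) (eo j').2.2) hjj
      exact eo.injective (Subtype.coe_injective h1)
    obtain ⟨b, hb1, hb2⟩ := hM m n0 (diagOf F G val)
      (diagOf_isExtensionDiagram hF hG val_inj) a haInj
    set Θ' : N → M := fun x => if hx : x ∈ New then b (en.symm ⟨x, hx⟩) else Θ x with hΘ'def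
    have key : ∀ (x : N) (hx : x ∈ W), Θ' x = Sum.elim a b (vo ⟨x, hx⟩) := by
      intro x hx
      by_cases hxτ : x ∈ Hull F d τ
      · have hnot : x ∉ New := fun hc => hc.2 hxτ
        simp only [hΘ'def, dif_neg hnot, hvodef, dif_pos hxτ, Sum.elim_inl, hadef,
          Equiv.apply_symm_apply]
      · simp only [hΘ'def, dif_pos (show x ∈ New from ⟨hx, hxτ⟩), hvodef, dif_neg hxτ,
          Sum.elim_inr]
    have keyOld : ∀ (x : N), x ∈ Hull F d τ → Θ' x = Θ x := by
      intro x hx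
      simp only [hΘ'def, dif_neg (fun hc : x ∈ New => hc.2 hx)]
    -- realization of the diagram formulas, transported along `key`
    have keyFun : ∀ (nf : ℕ) (f : L.Functions nf),
        (⟨nf, f⟩ : Σ k, L.Functions k) ∈ F → ∀ (w : Fin nf → N),
        (∀ i, w i ∈ W) → Structure.funMap f w ∈ W → (∃ i, w i ∉ Hull F d τ) →
        Θ' (Structure.funMap f w) = Structure.funMap f (Θ' ∘ w) := by
      intro nf f hf w hw hV ⟨i0, hi0⟩
      have hform : FlatFormula.func f (fun i => vo ⟨w i, hw i⟩) (vo ⟨_, hV⟩) ∈ diagOf F G val := by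
        refine ⟨hf, ⟨i0, vo_isRight _ hi0⟩, ?_⟩
        have : (fun i => val (vo ⟨w i, hw i⟩)) = w := by
          funext i; exact val_vo ⟨w i, hw i⟩
        rw [this, val_vo]
      have hreal := hb1 _ hform
      simp only [FlatFormula.Realize] at hreal
      rw [key _ hV, ← hreal]
      congr 1
      funext i
      exact (key (w i) (hw i)).symm
    have keyRel : ∀ (nR : ℕ) (R : L.Relations nR),
        (⟨nR, R⟩ : Σ k, L.Relations k) ∈ G → ∀ (w : Fin nR → N),
        (∀ i, w i ∈ W) → (∃ i, w i ∉ Hull F d τ) →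
        (Structure.RelMap R w ↔ Structure.RelMap R (Θ' ∘ w)) := by
      intro nR R hR w hw ⟨i0, hi0⟩
      have hvw : (fun i => val (vo ⟨w i, hw i⟩)) = w := by
        funext i; exact val_vo ⟨w i, hw i⟩
      have hform : FlatFormula.rel R (fun i => vo ⟨w i, hw i⟩)
          (if Structure.RelMap R w then true else false) ∈ diagOf F G val := by
        refine ⟨hR, ⟨i0, vo_isRight _ hi0⟩, ?_⟩
        rw [hvw]
        split_ifs with hc <;> simp [hc]
      have hreal := hb1 _ hform
      simp only [FlatFormula.Realize] at hreal
      have hcomp : (fun i => Sum.elim a b (vo ⟨w i, hw i⟩)) = Θ' ∘ w := by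
        funext i; exact (key (w i) (hw i)).symm
      rw [hcomp] at hreal
      rw [hreal]
      split_ifs with hc <;> simp [hc]
    -- assemble the new invariant witness
    refine ⟨Θ' e, Θ', ?_, ?_, ?_, ?_⟩
    · rintro (_ | i)
      · rfl
      · show Θ' (d i) = c i
        rw [keyOld (d i) (mem_hull_of_range i)]
        exact hΘ.map_base i
    · intro x hx y hy hxy
      rw [key x hx, key y hy] at hxy
      have h1 := congrArg val (hb2 hxy)
      rwa [val_vo, val_vo] at h1
    · intro s hs nf f hf w hw
      have hwW : ∀ i, w i ∈ W := fun i => hull_mono (le_of_lt hs) (hw i)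
      have hVW : Structure.funMap f w ∈ W :=
        hull_mono (by omega) (funMap_mem_hull hf hw)
      by_cases hnew : ∃ i, w i ∉ Hull F d τ
      · exact keyFun nf f hf w hwW hVW hnew
      · push_neg at hnew
        have hVτ : Structure.funMap f w ∈ Hull F d τ :=
          hgap _ hVW (funMap_mem_hull hf hnew)
        rw [keyOld _ hVτ, hΘ.map_fun τ (by omega) nf f hf w hnew]
        congr 1
        funext i
        exact (keyOld _ (hnew i)).symm
    · intro nR R hR w hw
      by_cases hnew : ∃ i, w i ∉ Hull F d τ
      · exact keyRel nR R hR w hw hnew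
      · push_neg at hnew
        have h1 := hΘ.map_rel nR R hR w (fun i => hull_mono (by omega) (hnew i))
        rw [h1]
        have : Θ ∘ w = Θ' ∘ w := by
          funext i; exact (keyOld _ (hnew i)).symm
        rw [this]

end TEmptyMC

namespace TEmptyMC

open FirstOrder FirstOrder.Language Set

variable {L : FirstOrder.Language.{v, w}} {F : Set (Σ n, L.Functions n)}
  {G : Set (Σ n, L.Relations n)} {α : Type*}

/-- Function symbols of a bounded formula. -/
def fsymsF : ∀ {l : ℕ}, L.BoundedFormula α l → Set (Σ n, L.Functions n)
  | _, .falsum => ∅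
  | _, .equal t₁ t₂ => tsyms t₁ ∪ tsyms t₂
  | _, .rel _ ts => ⋃ i, tsyms (ts i)
  | _, .imp φ ψ => fsymsF φ ∪ fsymsF ψ
  | _, .all φ => fsymsF φ

/-- Relation symbols of a bounded formula. -/
def fsymsR : ∀ {l : ℕ}, L.BoundedFormula α l → Set (Σ n, L.Relations n)
  | _, .falsum => ∅
  | _, .equal _ _ => ∅
  | _, .rel R _ => {⟨_, R⟩}
  | _, .imp φ ψ => fsymsR φ ∪ fsymsR ψ
  | _, .all φ => fsymsR φ

lemma fsymsF_finite : ∀ {l : ℕ} (φ : L.BoundedFormula α l), (fsymsF φ).Finite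
  | _, .falsum => Set.finite_empty
  | _, .equal t₁ t₂ => (tsyms_finite t₁).union (tsyms_finite t₂)
  | _, .rel _ ts => Set.finite_iUnion fun i => tsyms_finite (ts i)
  | _, .imp φ ψ => (fsymsF_finite φ).union (fsymsF_finite ψ)
  | _, .all φ => fsymsF_finite φ

lemma fsymsR_finite : ∀ {l : ℕ} (φ : L.BoundedFormula α l), (fsymsR φ).Finite
  | _, .falsum => Set.finite_empty
  | _, .equal _ _ => Set.finite_empty
  | _, .rel _ _ => Set.finite_singleton _
  | _, .imp φ ψ => (fsymsR_finite φ).union (fsymsR_finite ψ)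
  | _, .all φ => fsymsR_finite φ

/-- The hull depth needed for the back-and-forth argument on a given formula. -/
noncomputable def need (F : Set (Σ n, L.Functions n)) : ∀ {l : ℕ}, L.BoundedFormula α l → ℕ
  | _, .falsum => 0
  | _, .equal t₁ t₂ => max (tdepth t₁) (tdepth t₂)
  | _, .rel _ ts => Finset.univ.sup fun i => tdepth (ts i)
  | _, .imp φ ψ => max (need F φ) (need F ψ)
  | l, .all φ =>
      need F φ + (TermsB F (Option (α ⊕ Fin l)) (need F φ)).ncard + 1

/-- The index shuffle identifying `α ⊕ Fin (l+1)` with a subset of `Option (α ⊕ Fin l)`. -/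
def jmap (α : Type*) (l : ℕ) : α ⊕ Fin (l + 1) → Option (α ⊕ Fin l) :=
  Sum.elim (fun i => some (Sum.inl i))
    (fun i => Fin.lastCases none (fun i' => some (Sum.inr i')) i)

lemma jmap_comp₁ {β : Type*} (c : α ⊕ Fin l → β) (x : β) :
    ((fun o : Option (α ⊕ Fin l) => o.elim x c) ∘ jmap α l) ∘ Sum.inl = c ∘ Sum.inl := by
  funext i; rfl

lemma jmap_comp₂ {β : Type*} (c : α ⊕ Fin l → β) (x : β) :
    ((fun o : Option (α ⊕ Fin l) => o.elim x c) ∘ jmap α l) ∘ Sum.inr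
      = Fin.snoc (c ∘ Sum.inr) x := by
  funext i
  refine Fin.lastCases ?_ (fun i' => ?_) i
  · simp [jmap, Fin.snoc_last]
  · simp [jmap, Fin.snoc_castSucc]

lemma main_lemma {M : Type u₁} {N : Type u₂} [L.Structure M] [L.Structure N]
    [Nonempty M] [Nonempty N] (hM : ModelsTEmpty L M) (hN : ModelsTEmpty L N)
    (hF : F.Finite) (hG : G.Finite) [Fintype α] :
    ∀ {l : ℕ} (φ : L.BoundedFormula α l), fsymsF φ ⊆ F → fsymsR φ ⊆ G →
    ∀ ρ, need F φ ≤ ρ → ∀ (c : α ⊕ Fin l → M) (d : α ⊕ Fin l → N), Inv F G ρ c d →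
      (φ.Realize (c ∘ Sum.inl) (c ∘ Sum.inr) ↔ φ.Realize (d ∘ Sum.inl) (d ∘ Sum.inr)) := by
  intro l φ
  induction φ with
  | falsum =>
      intro _ _ ρ _ c d _
      simp [BoundedFormula.Realize]
  | equal t₁ t₂ =>
      intro hsF _ ρ hρ c d hInv
      obtain ⟨Θ, hΘ⟩ := hInv
      simp only [fsymsF, Set.union_subset_iff] at hsF
      simp only [need, max_le_iff] at hρ
      have ht₁ : t₁ ∈ TermsB F _ ρ := mem_termsB_of t₁ hsF.1 hρ.1
      have ht₂ : t₂ ∈ TermsB F _ ρ := mem_termsB_of t₂ hsF.2 hρ.2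
      simp only [BoundedFormula.Realize, Sum.elim_comp_inl_inr]
      constructor
      · intro hmeq
        refine hΘ.injOn ⟨t₁, ht₁, rfl⟩ ⟨t₂, ht₂, rfl⟩ ?_
        rw [hΘ.realize_term ρ le_rfl t₁ ht₁, hΘ.realize_term ρ le_rfl t₂ ht₂]
        exact hmeq
      · intro hneq
        rw [← hΘ.realize_term ρ le_rfl t₁ ht₁, ← hΘ.realize_term ρ le_rfl t₂ ht₂, hneq]
  | rel R ts =>
      intro hsF hsR ρ hρ c d hInv
      obtain ⟨Θ, hΘ⟩ := hInv
      have hR : (⟨_, R⟩ : Σ n, L.Relations n) ∈ G := hsR (by simp [fsymsR])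
      simp only [need] at hρ
      simp only [fsymsF] at hsF
      have hts : ∀ i, ts i ∈ TermsB F _ ρ := fun i =>
        mem_termsB_of (ts i) (fun x hx => hsF (Set.mem_iUnion.2 ⟨i, hx⟩))
          (le_trans (Finset.le_sup (f := fun i => tdepth (ts i)) (Finset.mem_univ i)) hρ)
      have hmr := hΘ.map_rel _ R hR (fun i => (ts i).realize d) (fun i => ⟨ts i, hts i, rfl⟩)
      have hcomp : (Θ ∘ fun i => (ts i).realize d) = fun i => (ts i).realize c := by
        funext i
        exact hΘ.realize_term ρ le_rfl (ts i) (hts i)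
      rw [hcomp] at hmr
      simp only [BoundedFormula.Realize, Sum.elim_comp_inl_inr]
      exact hmr.symm
  | imp φ ψ ihφ ihψ =>
      intro hsF hsR ρ hρ c d hInv
      simp only [fsymsF, fsymsR, Set.union_subset_iff] at hsF hsR
      simp only [need, max_le_iff] at hρ
      simp only [BoundedFormula.realize_imp]
      rw [ihφ hsF.1 hsR.1 ρ hρ.1 c d hInv, ihψ hsF.2 hsR.2 ρ hρ.2 c d hInv]
  | @all n f ih =>
      intro hsF hsR ρ hρ c d hInv
      simp only [fsymsF, fsymsR] at hsF hsR
      simp only [need] at hρ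
      set ν := need F f with hνdef
      set Tc := (TermsB F (Option (α ⊕ Fin n)) ν).ncard with hTcdef
      have hρ' : ν + Tc + 1 ≤ ρ := hρ
      have hInv' : Inv F G (ν + Tc + 1) c d := hInv.mono_depth hρ'
      simp only [BoundedFormula.realize_all]
      constructor
      · intro hall e
        obtain ⟨e', hInv2⟩ := extend_lemma hM hF hG ν c d e hInv'
        have hInv3 := hInv2.reindex (jmap α n)
        have hiff := ih hsF hsR ν le_rfl _ _ hInv3
        rw [jmap_comp₁, jmap_comp₂, jmap_comp₁, jmap_comp₂] at hiff
        exact hiff.mp (hall e')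
      · intro hall e'
        obtain ⟨e, hInv2⟩ := extend_lemma hN hF hG ν d c e' hInv'.symm
        have hInv3 := hInv2.symm.reindex (jmap α n)
        have hiff := ih hsF hsR ν le_rfl _ _ hInv3
        rw [jmap_comp₁, jmap_comp₂, jmap_comp₁, jmap_comp₂] at hiff
        exact hiff.mpr (hall e)

lemma nonempty_of_modelsTEmpty {M : Type u₁} [L.Structure M] (hM : ModelsTEmpty L M) :
    Nonempty M := by
  obtain ⟨b, -⟩ := hM 0 1 ∅
    ⟨Set.finite_empty,
      ⟨fun R z hmem => (Set.notMem_empty _) hmem.1,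
        fun f z z₁ z₂ hmem => absurd hmem (Set.notMem_empty _)⟩,
      fun ψ hmem => absurd hmem (Set.notMem_empty ψ)⟩
    Fin.elim0 (fun x => x.elim0)
  exact ⟨b 0⟩

end TEmptyMC

/-- `T^∅_L` is model complete: any `L`-embedding between models of
`T^∅_L` is elementary. -/
theorem tEmpty_model_complete (L : FirstOrder.Language.{v, w})
    (M : Type u) (N : Type u') [L.Structure M] [L.Structure N]
    (hM : ModelsTEmpty L M) (hN : ModelsTEmpty L N) (h : M ↪[L] N) :
    ∀ (k : ℕ) (φ : L.Formula (Fin k)) (v : Fin k → M),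
      φ.Realize (fun i => h (v i)) ↔ φ.Realize v := by
  classical
  intro k φ v
  haveI : Nonempty M := TEmptyMC.nonempty_of_modelsTEmpty hM
  haveI : Nonempty N := TEmptyMC.nonempty_of_modelsTEmpty hN
  set F := TEmptyMC.fsymsF φ with hFdef
  set G := TEmptyMC.fsymsR φ with hGdef
  set c : Fin k ⊕ Fin 0 → M := Sum.elim v Fin.elim0 with hcdef
  set d : Fin k ⊕ Fin 0 → N := fun z => h (c z) with hddef
  set Θ : N → M := fun y => if hy : ∃ x : M, h x = y then hy.choose else Classical.arbitrary M
    with hΘdef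
  have hΘh : ∀ x : M, Θ (h x) = x := by
    intro x
    have hex : ∃ x' : M, h x' = h x := ⟨x, rfl⟩
    simp only [hΘdef, dif_pos hex]
    exact h.injective hex.choose_spec
  have hhull : ∀ (s : ℕ) (y : N), y ∈ TEmptyMC.Hull F d s →
      ∃ x, x ∈ TEmptyMC.Hull F c s ∧ h x = y := by
    rintro s y ⟨t, ht, rfl⟩
    refine ⟨t.realize c, ⟨t, ht, rfl⟩, ?_⟩
    have hrt : Term.realize (⇑h ∘ c) t = h (Term.realize c t) := HomClass.realize_term h
    exact hrt.symm
  have hInv : TEmptyMC.Inv F G (TEmptyMC.need F φ) c d := by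
    refine ⟨Θ, ?_, ?_, ?_, ?_⟩
    · intro i
      exact hΘh (c i)
    · intro y₁ hy₁ y₂ hy₂ heq
      obtain ⟨x₁, _, rfl⟩ := hhull _ y₁ hy₁
      obtain ⟨x₂, _, rfl⟩ := hhull _ y₂ hy₂
      rw [hΘh, hΘh] at heq
      rw [heq]
    · intro s _ n f _ w hw
      choose u hu hhu using fun i => hhull s (w i) (hw i)
      have hw' : w = fun i => h (u i) := by funext i; exact (hhu i).symm
      rw [hw']
      have h1 : Structure.funMap f (fun i => h (u i)) = h (Structure.funMap f u) := by
        rw [h.map_fun]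
        rfl
      rw [h1, hΘh]
      congr 1
      funext i
      simp [Function.comp, hΘh]
    · intro n R _ w hw
      choose u hu hhu using fun i => hhull _ (w i) (hw i)
      have hw' : w = fun i => h (u i) := by funext i; exact (hhu i).symm
      rw [hw']
      have hcomp : (Θ ∘ fun i => h (u i)) = u := by funext i; simp [Function.comp, hΘh]
      rw [hcomp]
      exact h.map_rel R u
  have hmain := TEmptyMC.main_lemma hM hN (TEmptyMC.fsymsF_finite φ)
    (TEmptyMC.fsymsR_finite φ) φ subset_rfl subset_rfl (TEmptyMC.need F φ) le_rfl c d hInv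
  have h1 : c ∘ Sum.inl = v := rfl
  have h2 : c ∘ Sum.inr = (default : Fin 0 → M) := by funext i; exact i.elim0
  have h3 : d ∘ Sum.inl = fun i => h (v i) := rfl
  have h4 : d ∘ Sum.inr = (default : Fin 0 → N) := by funext i; exact i.elim0
  rw [h1, h2, h3, h4] at hmain
  exact hmain.symm
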